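/- Let $A$ and $M$ be infinite sets of positive integers with $A(x) \geq c \log x$ for some $c > 0$ and all sufficiently large $x$. Then $\limsup_{n \to \infty} \frac{\log p_{A,M}(n)}{\log n} = \infty$. -/

import Mathlib

set_option maxHeartbeats 1000000

open Filter

/-- `f` is a representation of `n` with parts in `A` and multiplicities in `M`:
`n = ∑ a ∈ A, m_a * a` with each nonzero multiplicity lying in `M`. -/
def IsRepr (A M : Set ℕ) (n : ℕ) (f : ℕ →₀ ℕ) : Prop :=
  (∀ a ∈ f.support, a ∈ A) ∧ (∀ a ∈ f.support, f a ∈ M) ∧ f.sum (fun a m => m * a) = n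

/-- number of partitions of `n` with parts in `A` and multiplicities in `M` -/
noncomputable def pAM (A M : Set ℕ) (n : ℕ) : ℕ :=
  Nat.card {f : ℕ →₀ ℕ // IsRepr A M n f}

/-- number of partitions of `n` with parts in `A` (unrestricted multiplicities) -/
noncomputable def pA (A : Set ℕ) (n : ℕ) : ℕ :=
  pAM A {m | 0 < m} n

/-- counting function of a set of positive integers -/
noncomputable def cnt (S : Set ℕ) (x : ℝ) : ℕ :=
  Nat.card {a : ℕ // a ∈ S ∧ (a : ℝ) ≤ x}

lemma reprs_bound {A M : Set ℕ} (hApos : ∀ a ∈ A, 0 < a) (hMpos : ∀ m ∈ M, 0 < m)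
    {n : ℕ} {f : ℕ →₀ ℕ} (hf : IsRepr A M n f) (a : ℕ) : f a ≤ n ∧ (f a ≠ 0 → a ≤ n) := by
  obtain ⟨hfA, hfM, hsum⟩ := hf
  by_cases ha : a ∈ f.support
  · have h1 : 0 < a := hApos a (hfA a ha)
    have h2 : 0 < f a := hMpos _ (hfM a ha)
    have hle : f a * a ≤ n := by
      rw [← hsum]
      exact Finset.single_le_sum (f := fun i => f i * i) (fun i _ => Nat.zero_le _) ha
    constructor
    · exact le_trans (Nat.le_mul_of_pos_right _ h1) hle
    · exact fun _ => le_trans (Nat.le_mul_of_pos_left _ h2) hle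
  · have h0 : f a = 0 := Finsupp.notMem_support_iff.mp ha
    simp [h0]

lemma reprs_finite (A M : Set ℕ) (hApos : ∀ a ∈ A, 0 < a) (hMpos : ∀ m ∈ M, 0 < m) (n : ℕ) :
    {f : ℕ →₀ ℕ | IsRepr A M n f}.Finite := by
  apply Set.Finite.of_finite_image
    (f := fun (f : ℕ →₀ ℕ) => fun i : Fin (n + 1) =>
      (⟨min (f i) n, Nat.lt_succ_of_le (min_le_right _ _)⟩ : Fin (n + 1)))
  · exact Set.toFinite _
  · intro f hf g hg h
    have hfb := reprs_bound hApos hMpos hf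
    have hgb := reprs_bound hApos hMpos hg
    ext a
    by_cases ha : a ≤ n
    · have := congrFun h ⟨a, Nat.lt_succ_of_le ha⟩
      have h1 : min (f a) n = min (g a) n := by
        simpa using this
      rwa [min_eq_left (hfb a).1, min_eq_left (hgb a).1] at h1
    · have h1 : f a = 0 := by
        by_contra hne
        exact ha ((hfb a).2 hne)
      have h2 : g a = 0 := by
        by_contra hne
        exact ha ((hgb a).2 hne)
      rw [h1, h2]

lemma pigeon {α β : Type*} [DecidableEq α] [DecidableEq β] (s : Finset α) (t : Finset β)
    (g : α → β) (ht : t.Nonempty) (hmaps : ∀ a ∈ s, g a ∈ t) :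
    ∃ y ∈ t, ∃ u : Finset α, u ⊆ s ∧ (∀ a ∈ u, g a = y) ∧ s.card ≤ t.card * u.card := by
  have hsum : ∑ y ∈ t, (s.filter (fun a => g a = y)).card = s.card :=
    (Finset.card_eq_sum_card_fiberwise hmaps).symm
  have h2 : ∑ _y ∈ t, s.card ≤ ∑ y ∈ t, t.card * (s.filter (fun a => g a = y)).card := by
    rw [← Finset.mul_sum, hsum, Finset.sum_const, smul_eq_mul]
  obtain ⟨y, hyt, hy⟩ := Finset.exists_le_of_sum_le ht h2
  exact ⟨y, hyt, s.filter (fun a => g a = y), Finset.filter_subset _ _,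
    fun a ha => (Finset.mem_filter.mp ha).2, hy⟩

theorem stmt14 (A M : Set ℕ) (hA : A.Infinite) (hM : M.Infinite)
    (hApos : ∀ a ∈ A, 0 < a) (hMpos : ∀ m ∈ M, 0 < m)
    (c : ℝ) (hc : 0 < c) (hAx : ∀ᶠ x : ℝ in atTop, c * Real.log x ≤ cnt A x) :
    limsup (fun n : ℕ => ((Real.log (pAM A M n) / Real.log n : ℝ) : EReal)) atTop = ⊤ := by
  classical
  rw [EReal.eq_top_iff_forall_lt]
  intro K0
  set K : ℝ := max K0 0 + 1 with hKdef
  have hK1 : 1 ≤ K := by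
    have := le_max_right K0 0
    simp only [hKdef]; linarith
  have hK0K : (K0 : EReal) < (K : EReal) := by
    have : K0 < K := by
      have := le_max_left K0 0
      simp only [hKdef]; linarith
    exact_mod_cast this
  refine lt_of_lt_of_le hK0K (le_limsup_of_frequently_le' ?_)
  rw [frequently_atTop]
  intro N
  -- choose r
  obtain ⟨r0, hr0⟩ := exists_nat_ge (Real.exp (5 * (K + 1) / c))
  set r : ℕ := max r0 2 with hrdef
  have hr2 : 2 ≤ r := le_max_right _ _
  have hrlog : 5 * (K + 1) / c ≤ Real.log r := by
    have h1 : Real.exp (5 * (K + 1) / c) ≤ (r : ℝ) :=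
      le_trans hr0 (by exact_mod_cast le_max_left r0 2)
    calc 5 * (K + 1) / c = Real.log (Real.exp (5 * (K + 1) / c)) := (Real.log_exp _).symm
      _ ≤ Real.log r := Real.log_le_log (Real.exp_pos _) h1
  have hrlogpos : 0 < Real.log r :=
    lt_of_lt_of_le (by positivity) hrlog
  -- choose T
  obtain ⟨T, hTM, hTcard⟩ := hM.exists_subset_card_eq r
  have hTne : T.Nonempty := Finset.card_pos.mp (by omega)
  set m : ℕ := T.max' hTne with hmdef
  have hmM : m ∈ M := hTM (T.max'_mem hTne)
  have hmpos : 0 < m := hMpos m hmM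
  -- choose X
  obtain ⟨x₀, hx₀⟩ := eventually_atTop.mp hAx
  obtain ⟨X1, hX1⟩ := exists_nat_ge x₀
  obtain ⟨X2, hX2⟩ := exists_nat_ge (Real.exp (max (N : ℝ) 2 / c))
  set X : ℕ := max (max X1 X2) (max m 2) with hXdef
  have hXm : m ≤ X := le_trans (le_max_left m 2) (le_max_right _ _)
  have hX2' : 2 ≤ X := le_trans (le_max_right m 2) (le_max_right _ _)
  have hX1R : (1 : ℝ) < X := by exact_mod_cast lt_of_lt_of_le one_lt_two (by exact_mod_cast hX2')
  have hXlogpos : 0 < Real.log X := Real.log_pos hX1R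
  have hXcnt : c * Real.log X ≤ cnt A X := by
    apply hx₀
    calc x₀ ≤ (X1 : ℝ) := hX1
      _ ≤ (X : ℝ) := by exact_mod_cast le_trans (le_max_left X1 X2) (le_max_left _ _)
  have hXNc : max (N : ℝ) 2 ≤ c * Real.log X := by
    have hX2R : Real.exp (max (N : ℝ) 2 / c) ≤ (X : ℝ) :=
      le_trans hX2 (by exact_mod_cast le_trans (le_max_right X1 X2) (le_max_left _ _))
    have : max (N : ℝ) 2 / c ≤ Real.log X := by
      calc max (N : ℝ) 2 / c = Real.log (Real.exp (max (N : ℝ) 2 / c)) := (Real.log_exp _).symm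
        _ ≤ Real.log X := Real.log_le_log (Real.exp_pos _) hX2R
    rw [div_le_iff₀ hc] at this
    linarith [this]
  -- the finset of elements of A up to X
  set AX : Finset ℕ := (Finset.range (X + 1)).filter (fun a => a ∈ A) with hAXdef
  set k : ℕ := AX.card with hkdef
  have hAXmem : ∀ a, a ∈ AX ↔ a ∈ A ∧ a ≤ X := by
    intro a
    simp [hAXdef, Finset.mem_filter, Finset.mem_range, Nat.lt_succ_iff, and_comm]
  have hcnt_eq : cnt A (X : ℝ) = k := by
    have hset : {a : ℕ | a ∈ A ∧ (a : ℝ) ≤ (X : ℝ)} = ↑AX := by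
      ext a
      simp only [Set.mem_setOf_eq, Finset.mem_coe, hAXmem a, Nat.cast_le]
    show Nat.card {a : ℕ // a ∈ A ∧ (a : ℝ) ≤ (X : ℝ)} = k
    calc Nat.card {a : ℕ // a ∈ A ∧ (a : ℝ) ≤ (X : ℝ)}
        = Nat.card {a : ℕ | a ∈ A ∧ (a : ℝ) ≤ (X : ℝ)} := rfl
      _ = ({a : ℕ | a ∈ A ∧ (a : ℝ) ≤ (X : ℝ)} : Set ℕ).ncard := Nat.card_coe_set_eq _
      _ = (↑AX : Set ℕ).ncard := by rw [hset]
      _ = AX.card := Set.ncard_coe_finset _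
  have hk : c * Real.log X ≤ (k : ℝ) := by rw [← hcnt_eq]; exact hXcnt
  have hk2 : 2 ≤ k := by
    have : (2 : ℝ) ≤ (k : ℝ) := le_trans (le_trans (le_max_right (N : ℝ) 2) hXNc) hk
    exact_mod_cast this
  have hkN : (N : ℝ) ≤ (k : ℝ) := le_trans (le_trans (le_max_left (N : ℝ) 2) hXNc) hk
  have hkX : k ≤ X + 1 := by
    calc k ≤ (Finset.range (X + 1)).card := Finset.card_le_card (Finset.filter_subset _ _)
      _ = X + 1 := Finset.card_range _
  -- the family of representations
  set B : ℕ := m * (X + 1) * (X + 1) with hBdef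
  have hB1 : 1 < B := by
    have : 3 ≤ X + 1 := by omega
    calc 1 < 1 * 3 * 3 := by norm_num
      _ ≤ m * (X + 1) * (X + 1) := by
          exact Nat.mul_le_mul (Nat.mul_le_mul hmpos this) this
  set ν : (ℕ →₀ ℕ) → ℕ := fun f => f.sum (fun a m => m * a) with hνdef
  set φ : (↥AX → ↥T) → (ℕ →₀ ℕ) := fun g =>
    Finsupp.onFinset AX (fun a => if h : a ∈ AX then ((g ⟨a, h⟩ : ℕ)) else 0)
      (fun a ha => by by_contra h; exact ha (dif_neg h)) with hφdef
  have hφapp : ∀ g (a : ℕ) (h : a ∈ AX), φ g a = (g ⟨a, h⟩ : ℕ) := by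
    intro g a h
    simp only [hφdef]
    exact dif_pos h
  have hφinj : Function.Injective φ := by
    intro g g' h
    funext a
    have h2 := DFunLike.congr_fun h (a : ℕ)
    rw [hφapp g a a.2, hφapp g' a a.2] at h2
    exact Subtype.ext h2
  have hφsupp : ∀ g, (φ g).support ⊆ AX := fun g => Finsupp.support_onFinset_subset
  have hφsum : ∀ g, ν (φ g) = ∑ a ∈ AX, φ g a * a := by
    intro g
    exact Finsupp.sum_of_support_subset _ (hφsupp g) _ (by intros; simp)
  have hφmemT : ∀ g (a : ℕ) (h : a ∈ AX), φ g a ∈ T := by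
    intro g a h
    rw [hφapp g a h]
    exact (g ⟨a, h⟩).2
  have hφsum_le : ∀ g, ν (φ g) ≤ B := by
    intro g
    rw [hφsum g]
    calc ∑ a ∈ AX, φ g a * a ≤ ∑ _a ∈ AX, m * X := by
          apply Finset.sum_le_sum
          intro a ha
          exact Nat.mul_le_mul (T.le_max' _ (hφmemT g a ha)) ((hAXmem a).mp ha).2
      _ = k * (m * X) := by rw [Finset.sum_const, smul_eq_mul]
      _ ≤ (X + 1) * (m * (X + 1)) :=
          Nat.mul_le_mul hkX (Nat.mul_le_mul (le_refl m) (Nat.le_succ X))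
      _ = B := by ring
  have hφsum_ge : ∀ g, k ≤ ν (φ g) := by
    intro g
    rw [hφsum g]
    calc k = ∑ _a ∈ AX, 1 := by rw [Finset.sum_const, smul_eq_mul, mul_one]
      _ ≤ ∑ a ∈ AX, φ g a * a := by
          apply Finset.sum_le_sum
          intro a ha
          have h1 : 0 < φ g a := by
            exact hMpos _ (hTM (Finset.mem_coe.mpr (hφmemT g a ha)))
          have h2 : 0 < a := hApos a ((hAXmem a).mp ha).1
          calc 1 = 1 * 1 := by norm_num
            _ ≤ φ g a * a := Nat.mul_le_mul h1 h2
  set s : Finset (ℕ →₀ ℕ) := Finset.image φ Finset.univ with hsdef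
  have hscard : s.card = r ^ k := by
    rw [hsdef, Finset.card_image_of_injective _ hφinj, Finset.card_univ, Fintype.card_fun,
      Fintype.card_coe, Fintype.card_coe, hTcard, hkdef]
  set t : Finset ℕ := Finset.Icc 1 B with htdef
  have htne : t.Nonempty := ⟨1, by simp [htdef]; omega⟩
  have htcard : t.card = B := by simp [htdef, Nat.card_Icc]
  have hmaps : ∀ f ∈ s, ν f ∈ t := by
    intro f hf
    obtain ⟨g, _, rfl⟩ := Finset.mem_image.mp hf
    rw [htdef, Finset.mem_Icc]
    exact ⟨le_trans (by omega) (hφsum_ge g), hφsum_le g⟩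
  obtain ⟨n, hnt, fib, hfibs, hfibeq, hfib⟩ := pigeon s t ν htne hmaps
  have hrkpos : 0 < r ^ k := Nat.pow_pos (by omega)
  have hfibpos : 0 < fib.card := by
    rcases Nat.eq_zero_or_pos fib.card with h | h
    · rw [hscard, h, Nat.mul_zero] at hfib; omega
    · exact h
  obtain ⟨f₀, hf₀⟩ := Finset.card_pos.mp hfibpos
  have hf₀s : f₀ ∈ s := hfibs hf₀
  have hf₀n : ν f₀ = n := hfibeq f₀ hf₀
  have hnk : k ≤ n := by
    obtain ⟨g, _, rfl⟩ := Finset.mem_image.mp hf₀s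
    rw [← hf₀n]
    exact hφsum_ge g
  have hnB : n ≤ B := (Finset.mem_Icc.mp hnt).2
  have hn2 : 2 ≤ n := le_trans hk2 hnk
  -- lower bound on pAM
  have hrepr : ∀ f ∈ fib, IsRepr A M n f := by
    intro f hf
    have hfs := hfibs hf
    have hfn := hfibeq f hf
    obtain ⟨g, _, rfl⟩ := Finset.mem_image.mp hfs
    refine ⟨?_, ?_, hfn⟩
    · intro a ha
      exact ((hAXmem a).mp (hφsupp g ha)).1
    · intro a ha
      exact hTM (Finset.mem_coe.mpr (hφmemT g a (hφsupp g ha)))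
  have hfin := reprs_finite A M hApos hMpos n
  have hple : fib.card ≤ pAM A M n := by
    have hsub : fib ⊆ hfin.toFinset := by
      intro f hf
      rw [Set.Finite.mem_toFinset]
      exact hrepr f hf
    calc fib.card ≤ hfin.toFinset.card := Finset.card_le_card hsub
      _ = ({f : ℕ →₀ ℕ | IsRepr A M n f} : Set (ℕ →₀ ℕ)).ncard :=
          (Set.ncard_eq_toFinset_card _ hfin).symm
      _ = Nat.card {f : ℕ →₀ ℕ // IsRepr A M n f} := (Nat.card_coe_set_eq _).symm
      _ = pAM A M n := rfl
  set p : ℕ := pAM A M n with hpdef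
  have hBposR : (0 : ℝ) < (B : ℝ) := by exact_mod_cast lt_trans one_pos hB1
  have hp_lb : (r : ℝ) ^ k / (B : ℝ) ≤ (p : ℝ) := by
    rw [div_le_iff₀ hBposR]
    have hnat : r ^ k ≤ p * B := by
      calc r ^ k = s.card := hscard.symm
        _ ≤ t.card * fib.card := hfib
        _ = B * fib.card := by rw [htcard]
        _ ≤ B * p := Nat.mul_le_mul (le_refl B) hple
        _ = p * B := Nat.mul_comm B p
    exact_mod_cast hnat
  have hppos : (0 : ℝ) < (p : ℝ) := lt_of_lt_of_le (by positivity) hp_lb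
  have hlogp : (k : ℝ) * Real.log r - Real.log B ≤ Real.log p := by
    have h1 := Real.log_le_log (by positivity) hp_lb
    rwa [Real.log_div (by positivity) (ne_of_gt hBposR), Real.log_pow] at h1
  have hlogB_le : Real.log B ≤ 5 * Real.log X := by
    have hBle : B ≤ X ^ 5 := by
      have h1 : X + 1 ≤ X ^ 2 := by nlinarith [hX2']
      calc B = m * (X + 1) * (X + 1) := rfl
        _ ≤ X * X ^ 2 * X ^ 2 := Nat.mul_le_mul (Nat.mul_le_mul hXm h1) h1
        _ = X ^ 5 := by ring
    calc Real.log B ≤ Real.log ((X : ℝ) ^ 5) := by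
          apply Real.log_le_log hBposR
          exact_mod_cast hBle
      _ = 5 * Real.log X := by rw [Real.log_pow]; norm_num
  have hkey : (K + 1) * Real.log B ≤ (k : ℝ) * Real.log r := by
    calc (K + 1) * Real.log B ≤ (K + 1) * (5 * Real.log X) :=
          mul_le_mul_of_nonneg_left hlogB_le (by linarith)
      _ = (5 * (K + 1) / c) * (c * Real.log X) := by field_simp
      _ ≤ Real.log r * (k : ℝ) := by
          apply mul_le_mul hrlog hk (by positivity) (le_of_lt hrlogpos)
      _ = (k : ℝ) * Real.log r := mul_comm _ _
  have hlogn_pos : 0 < Real.log n := Real.log_pos (by exact_mod_cast hn2)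
  have hlogn_le : Real.log n ≤ Real.log B := by
    apply Real.log_le_log (by positivity)
    exact_mod_cast hnB
  have hlogBpos : 0 < Real.log B := lt_of_lt_of_le hlogn_pos hlogn_le
  have hfinal : K ≤ Real.log p / Real.log n := by
    rw [le_div_iff₀ hlogn_pos]
    calc K * Real.log n ≤ K * Real.log B :=
          mul_le_mul_of_nonneg_left hlogn_le (by linarith)
      _ = (K + 1) * Real.log B - Real.log B := by ring
      _ ≤ (k : ℝ) * Real.log r - Real.log B := by linarith
      _ ≤ Real.log p := hlogp
  refine ⟨n, ?_, ?_⟩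
  · have : (N : ℝ) ≤ (n : ℝ) := le_trans hkN (by exact_mod_cast hnk)
    exact_mod_cast this
  · exact_mod_cast hfinal
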